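/- Let G be a finite group with trivial center whose element orders all lie in {1, 2, 3} and such that a Sylow 2-subgroup P of G is abelian. If G contains an element y of order 3, then the non-commuting graph of G contains a complete bipartite subgraph K_{|P|−1, |P|}, and hence if this graph is projective (crosscap 1) then |P| ≤ 4. -/

import Mathlib

open SimpleGraph

/-- The non-commuting graph of a group `G`: vertices are the non-central elements,
two vertices are adjacent iff they do not commute. -/
def nonCommGraph (G : Type*) [Group G] : SimpleGraph {x : G // x ∉ Subgroup.center G} where
  Adj x y := (x : G) * y ≠ (y : G) * x
  symm := ⟨fun _ _ h he => h he.symm⟩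
  loopless := ⟨fun _ h => h rfl⟩

/-- A rotation system (combinatorial orientable embedding) of a graph: a permutation of
the darts preserving tails and acting with a single cycle on the darts at each vertex. -/
structure RotationSystem {V : Type*} (Γ : SimpleGraph V) where
  rot : Equiv.Perm Γ.Dart
  tail_eq : ∀ d, (rot d).toProd.1 = d.toProd.1
  cyclic : ∀ d e : Γ.Dart, d.toProd.1 = e.toProd.1 → ∃ k : ℕ, (rot ^ k) d = e

/-- The number of faces of the embedding determined by a rotation system: the number of
orbits of the face-tracing map `d ↦ rot d.symm`, plus one face for each isolated vertex. -/
noncomputable def RotationSystem.numFaces {V : Type*} {Γ : SimpleGraph V}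
    (R : RotationSystem Γ) : ℕ :=
  Nat.card (Quotient (Relation.EqvGen.setoid (fun d e : Γ.Dart => R.rot d.symm = e)))
    + Nat.card {v : V // ∀ w, ¬ Γ.Adj v w}

/-- The (orientable) genus of a graph: the least `g` such that some rotation system
satisfies the Euler formula bound `E + 2c ≤ V + F + 2g`
(i.e. `V - E + F = 2c - 2·(sum of component genera)` with total component genus `≤ g`). -/
noncomputable def genus {V : Type*} (Γ : SimpleGraph V) : ℕ :=
  sInf {g : ℕ | ∃ R : RotationSystem Γ,
    (Nat.card Γ.edgeSet : ℤ) + 2 * Nat.card Γ.ConnectedComponent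
      ≤ Nat.card V + R.numFaces + 2 * g}

/-- An embedding scheme: a rotation system together with an edge signature,
encoding an embedding in a possibly non-orientable surface. -/
structure EmbeddingScheme {V : Type*} (Γ : SimpleGraph V) extends RotationSystem Γ where
  sign : Sym2 V → Bool

/-- The face-tracing step of an embedding scheme, acting on darts with a side indicator. -/
def EmbeddingScheme.faceStep {V : Type*} {Γ : SimpleGraph V} (S : EmbeddingScheme Γ) :
    Γ.Dart × Bool → Γ.Dart × Bool :=
  fun p =>
    let t := xor p.2 (S.sign p.1.edge)
    (if t then S.rot.symm p.1.symm else S.rot p.1.symm, t)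

/-- The number of faces of an embedding scheme: half the number of orbits of the
face-tracing step, plus one face for each isolated vertex. -/
noncomputable def EmbeddingScheme.numFaces {V : Type*} {Γ : SimpleGraph V}
    (S : EmbeddingScheme Γ) : ℕ :=
  Nat.card (Quotient (Relation.EqvGen.setoid
      (fun a b : Γ.Dart × Bool => S.faceStep a = b))) / 2
    + Nat.card {v : V // ∀ w, ¬ Γ.Adj v w}

/-- An embedding scheme is orientable if its signature is switching-equivalent to the
trivial one. -/
def EmbeddingScheme.Orientable {V : Type*} {Γ : SimpleGraph V}
    (S : EmbeddingScheme Γ) : Prop :=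
  ∃ s : V → Bool, ∀ d : Γ.Dart, S.sign d.edge = xor (s d.toProd.1) (s d.toProd.2)

/-- The crosscap number (non-orientable genus) of a graph: the least `k` such that some
non-orientable embedding scheme satisfies the Euler formula bound `E + 2c ≤ V + F + k`. -/
noncomputable def crosscap {V : Type*} (Γ : SimpleGraph V) : ℕ :=
  sInf {k : ℕ | ∃ S : EmbeddingScheme Γ, ¬ S.Orientable ∧
    (Nat.card Γ.edgeSet : ℤ) + 2 * Nat.card Γ.ConnectedComponent
      ≤ Nat.card V + S.numFaces + k}



section A
variable {V : Type*} {Γ : SimpleGraph V}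

lemma rot_symm_tail (R : RotationSystem Γ) (d : Γ.Dart) :
    (R.rot.symm d).toProd.1 = d.toProd.1 := by
  conv_rhs => rw [← R.rot.apply_symm_apply d]
  exact (R.tail_eq _).symm

lemma faceStep_fst_tail (S : EmbeddingScheme Γ) (p : Γ.Dart × Bool) :
    (S.faceStep p).1.toProd.1 = p.1.toProd.2 := by
  unfold EmbeddingScheme.faceStep
  dsimp only
  split
  · rw [rot_symm_tail S.toRotationSystem]; rfl
  · rw [S.toRotationSystem.tail_eq]; rfl

lemma faceStep_ne (S : EmbeddingScheme Γ) (p : Γ.Dart × Bool) : S.faceStep p ≠ p := by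
  intro h
  have h1 := faceStep_fst_tail S p
  rw [h] at h1
  exact p.1.adj.ne h1

lemma rot_fix_unique (R : RotationSystem Γ) {d : Γ.Dart} (hd : R.rot d = d)
    (e : Γ.Dart) (he : e.toProd.1 = d.toProd.1) : e = d := by
  obtain ⟨k, hk⟩ := R.cyclic d e he.symm
  have : ∀ k : ℕ, (R.rot ^ k) d = d := by
    intro k
    induction k with
    | zero => rfl
    | succ n ih => rw [pow_succ, Equiv.Perm.mul_apply, hd, ih]
  rw [this k] at hk
  exact hk.symm

lemma faceStep_faceStep_ne (S : EmbeddingScheme Γ)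
    (hdeg : ∀ d : Γ.Dart, ∃ e : Γ.Dart, e.toProd.1 = d.toProd.1 ∧ e ≠ d)
    (p : Γ.Dart × Bool) : S.faceStep (S.faceStep p) ≠ p := by
  intro h
  set q := S.faceStep p with hq
  have h1 : q.1.toProd.1 = p.1.toProd.2 := faceStep_fst_tail S p
  have h2 : p.1.toProd.1 = q.1.toProd.2 := by
    have := faceStep_fst_tail S q
    rw [h] at this
    exact this
  have hqsymm : q.1 = p.1.symm := by
    apply Dart.ext
    ext
    · exact h1
    · exact h2.symm
  -- q.1 is rot^{±1} of p.1.symm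
  have hfix : S.rot p.1.symm = p.1.symm := by
    have : q.1 = (if xor p.2 (S.sign p.1.edge) then S.rot.symm p.1.symm
        else S.rot p.1.symm) := rfl
    rw [hqsymm] at this
    split at this
    · conv_lhs => rw [this]
      exact (S.rot.apply_symm_apply _)
    · exact this.symm
  obtain ⟨e, he, hne⟩ := hdeg p.1.symm
  exact hne (rot_fix_unique S.toRotationSystem hfix e he)

lemma three_mul_card_le {α : Type*} [Finite α] (f : α → α)
    (h1 : ∀ a, f a ≠ a) (h2 : ∀ a, f (f a) ≠ a) :
    3 * Nat.card (Quotient (Relation.EqvGen.setoid (fun a b : α => f a = b)))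
      ≤ Nat.card α := by
  classical
  set s := Relation.EqvGen.setoid (fun a b : α => f a = b) with hs
  have hmk : ∀ a : α, Quotient.mk s (f a) = Quotient.mk s a := by
    intro a
    exact Quotient.sound (Relation.EqvGen.symm _ _ (Relation.EqvGen.rel _ _ rfl))
  set g : Quotient s × Fin 3 → α := fun qi =>
    if qi.2 = 0 then qi.1.out else if qi.2 = 1 then f qi.1.out else f (f qi.1.out) with hg
  have hcls : ∀ qi : Quotient s × Fin 3, Quotient.mk s (g qi) = qi.1 := by
    rintro ⟨q, i⟩
    simp only [hg]
    split
    · exact q.out_eq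
    · split
      · rw [hmk]; exact q.out_eq
      · rw [hmk, hmk]; exact q.out_eq
  have hginj : Function.Injective g := by
    rintro ⟨q, i⟩ ⟨q', j⟩ hij
    have hqq : q = q' := by
      have e1 := hcls ⟨q, i⟩
      have e2 := hcls ⟨q', j⟩
      dsimp at e1 e2
      rw [hij] at e1
      exact e1.symm.trans e2
    subst hqq
    suffices hij2 : i = j by rw [hij2]
    by_contra hne
    fin_cases i <;> fin_cases j <;> simp_all [hg] <;>
      first
        | exact h1 _ hij.symm
        | exact h1 _ hij
        | exact h2 _ hij.symm
        | exact h2 _ hij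
  have := Nat.card_le_card_of_injective g hginj
  rwa [Nat.card_prod, Nat.card_eq_fintype_card (α := Fin 3), Fintype.card_fin,
    mul_comm] at this
end A


section B
variable {G : Type*} [Group G] [Finite G]

lemma key_noncomm (hord : ∀ g : G, orderOf g = 1 ∨ orderOf g = 2 ∨ orderOf g = 3)
    (P : Sylow 2 G)
    (hP : ∀ a ∈ (P : Subgroup G), ∀ b ∈ (P : Subgroup G), a * b = b * a)
    {y : G} (hy : orderOf y = 3) :
    ∀ a ∈ (P : Subgroup G), a ≠ 1 → ∀ p ∈ (P : Subgroup G), a * (p * y) ≠ (p * y) * a := by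
  intro a ha ha1 p hp hcomm
  have hap := hP a ha p hp
  have hay : a * y = y * a := by
    have h : p * (a * y) = p * (y * a) := by
      calc p * (a * y) = (p * a) * y := (mul_assoc _ _ _).symm
        _ = (a * p) * y := by rw [← hap]
        _ = a * (p * y) := mul_assoc _ _ _
        _ = (p * y) * a := hcomm
        _ = p * (y * a) := mul_assoc _ _ _
    exact mul_left_cancel h
  have ha2 : orderOf a = 2 := by
    rcases hord a with h | h | h
    · exact absurd (orderOf_eq_one_iff.mp h) ha1
    · exact h
    · exfalso
      obtain ⟨k, hk⟩ := P.isPGroup' ⟨a, ha⟩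
      have hk' : a ^ (2 ^ k) = 1 := by
        have := congrArg (Subtype.val) hk
        simpa using this
      have hdvd : orderOf a ∣ 2 ^ k := orderOf_dvd_of_pow_eq_one hk'
      rw [h] at hdvd
      have := Nat.Prime.dvd_of_dvd_pow Nat.prime_three hdvd
      omega
  have ha2' : a ^ 2 = 1 := by rw [← ha2]; exact pow_orderOf_eq_one a
  have hy3 : y ^ 3 = 1 := by rw [← hy]; exact pow_orderOf_eq_one y
  have hc : Commute a y := hay
  rcases hord (a * y) with h | h | h
  · have h1 : a * y = 1 := orderOf_eq_one_iff.mp h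
    have : y = a⁻¹ := by rw [eq_inv_iff_mul_eq_one, ← hay]; exact h1
    rw [this, orderOf_inv, ha2] at hy
    omega
  · have h1 : (a * y) ^ 2 = 1 := by rw [← h]; exact pow_orderOf_eq_one _
    rw [hc.mul_pow, ha2', one_mul] at h1
    have := orderOf_dvd_of_pow_eq_one h1
    rw [hy] at this
    omega
  · have h1 : (a * y) ^ 3 = 1 := by rw [← h]; exact pow_orderOf_eq_one _
    rw [hc.mul_pow, hy3, mul_one] at h1
    have : a = 1 := by
      have : a ^ 3 = a ^ 2 * a := pow_succ a 2
      rw [this, ha2', one_mul] at h1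
      exact h1
    exact ha1 this
end B


/-- Let `G` be a finite group with trivial center whose element orders lie in
`{1, 2, 3}`, with an abelian Sylow `2`-subgroup `P` and an element `y` of order `3`.
Then the non-commuting graph of `G` contains a complete bipartite subgraph
`K_{|P|-1, |P|}`; hence if this graph is projective (crosscap `1`) then `|P| ≤ 4`. -/
theorem sylow_two_bound_of_projective (G : Type*) [Group G] [Finite G]
    (hZ : Subgroup.center G = ⊥)
    (hord : ∀ g : G, orderOf g = 1 ∨ orderOf g = 2 ∨ orderOf g = 3)
    (P : Sylow 2 G)
    (hP : ∀ a ∈ (P : Subgroup G), ∀ b ∈ (P : Subgroup G), a * b = b * a)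
    (y : G) (hy : orderOf y = 3) :
    (∃ A B : Finset G,
        A.card = Nat.card (P : Subgroup G) - 1 ∧ B.card = Nat.card (P : Subgroup G) ∧
        (↑A ⊆ ((P : Subgroup G) : Set G) \ {1}) ∧
        (↑B ⊆ {g : G | ∃ p ∈ (P : Subgroup G), g = p * y}) ∧
        ∀ a ∈ A, ∀ b ∈ B, a * b ≠ b * a) ∧
      (crosscap (nonCommGraph G) = 1 → Nat.card (P : Subgroup G) ≤ 4) := by
  classical
  haveI := Fintype.ofFinite G
  haveI : Fact (Nat.Prime 2) := ⟨Nat.prime_two⟩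
  have hy1 : y ≠ 1 := by
    intro h; rw [h, orderOf_one] at hy; omega
  have key := key_noncomm hord P hP hy
  have hcardP : (((P : Subgroup G) : Set G).toFinset).card = Nat.card (P : Subgroup G) := by
    rw [Set.toFinset_card, Nat.card_eq_fintype_card]
    exact Fintype.card_congr (Equiv.subtypeEquivRight fun x => by simp; exact Iff.rfl)
  constructor
  · refine ⟨(((P : Subgroup G) : Set G).toFinset).erase 1,
      (((P : Subgroup G) : Set G).toFinset).image (· * y), ?_, ?_, ?_, ?_, ?_⟩
    · rw [Finset.card_erase_of_mem (by simpa using (P : Subgroup G).one_mem), hcardP]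
    · rw [Finset.card_image_of_injective _ (mul_left_injective y), hcardP]
    · intro x hx
      simp only [Finset.coe_erase, Set.mem_diff, Set.mem_toFinset] at hx ⊢
      simp only [Set.mem_singleton_iff]
      exact ⟨by simpa using hx.1, hx.2⟩
    · intro x hx
      simp only [Finset.coe_image, Set.mem_image, Finset.mem_coe, Set.mem_toFinset,
        SetLike.mem_coe] at hx
      obtain ⟨p, hp, hpx⟩ := hx
      exact ⟨p, hp, hpx.symm⟩
    · intro a ha b hb
      simp only [Finset.mem_erase, Set.mem_toFinset] at ha
      simp only [Finset.mem_image, Set.mem_toFinset] at hb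
      obtain ⟨p, hp, rfl⟩ := hb
      exact key a ha.2 ha.1 p hp
  · intro hcross
    by_contra hle
    push_neg at hle
    set N := Nat.card G with hN
    have hNpos : 0 < N := Nat.card_pos
    -- |P| is a power of 2 that is > 4, hence ≥ 8; so 24 ∣ N and N ≥ 24
    have hN24 : 24 ≤ N := by
      have hk := P.card_eq_multiplicity
      set k := (Nat.card G).factorization 2 with hkdef
      have hk3 : 3 ≤ k := by
        by_contra hlt
        push_neg at hlt
        interval_cases k <;> omega
      have h8P : (8 : ℕ) ∣ Nat.card (P : Subgroup G) := by
        rw [hk]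
        exact (pow_dvd_pow 2 hk3 : (2:ℕ)^3 ∣ 2^k)
      have h8 : (8 : ℕ) ∣ N := h8P.trans (Subgroup.card_subgroup_dvd_card _)
      have h3 : (3 : ℕ) ∣ N := by
        rw [hN, Nat.card_eq_fintype_card]
        exact hy ▸ orderOf_dvd_card
      have h24 : (24 : ℕ) ∣ N := by
        have := Nat.Coprime.mul_dvd_of_dvd_of_dvd (by norm_num : Nat.Coprime 8 3) h8 h3
        simpa using this
      exact Nat.le_of_dvd hNpos h24
    -- centralizers of nontrivial elements have index ≥ 2
    have hcent : ∀ x : G, x ≠ 1 → 2 * Nat.card (Subgroup.centralizer {x}) ≤ N := by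
      intro x hx
      set C := Subgroup.centralizer {x} with hC
      have hdvd : Nat.card C ∣ N := Subgroup.card_subgroup_dvd_card C
      have hne : Nat.card C ≠ N := by
        intro h
        have htop : C = ⊤ := Subgroup.eq_top_of_card_eq C h
        have hxc : x ∈ Subgroup.center G := by
          rw [Subgroup.mem_center_iff]
          intro g
          have hg : g ∈ C := htop ▸ Subgroup.mem_top g
          exact Subgroup.mem_centralizer_singleton_iff.mp hg
        rw [hZ] at hxc
        exact hx (Subgroup.mem_bot.mp hxc)
      obtain ⟨m, hm⟩ := hdvd
      have hm2 : 2 ≤ m := by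
        rcases Nat.lt_or_ge m 2 with h | h
        · interval_cases m <;> omega
        · exact h
      calc 2 * Nat.card C = Nat.card C * 2 := mul_comm _ _
        _ ≤ Nat.card C * m := Nat.mul_le_mul_left _ hm2
        _ = N := hm.symm
    set Γ := nonCommGraph G with hΓ
    haveI : DecidableRel Γ.Adj := fun _ _ => Classical.dec _
    have hne1 : ∀ v : {x : G // x ∉ Subgroup.center G}, (v : G) ≠ 1 := by
      rintro ⟨v, hv⟩ h
      exact hv (by rw [hZ]; simpa using h)
    -- vertex count
    have hVcard : Nat.card {x : G // x ∉ Subgroup.center G} = N - 1 := by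
      rw [Nat.card_eq_fintype_card,
        Fintype.card_congr (Equiv.subtypeEquivRight
          (fun x => by rw [hZ]; simp : ∀ x : G, x ∉ Subgroup.center G ↔ ¬(x = 1))),
        Fintype.card_subtype_compl, Fintype.card_subtype_eq, hN, Nat.card_eq_fintype_card]
    -- degree bound
    have hdegv : ∀ v, N ≤ 2 * Γ.degree v := by
      intro v
      have e : (Γ.neighborSet v) ≃ {g : G // g ∉ Subgroup.centralizer {(v : G)}} :=
        { toFun := fun z => ⟨((z : {x : G // x ∉ Subgroup.center G}) : G), fun hc =>
            (show (v : G) * ((z : {x : G // x ∉ Subgroup.center G}) : G) ≠ _ from z.2)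
              (Subgroup.mem_centralizer_singleton_iff.mp hc).symm⟩
          invFun := fun g => ⟨⟨(g : G), fun hc => g.2 (by
              rw [Subgroup.mem_centralizer_singleton_iff]
              exact (Subgroup.mem_center_iff.mp hc (v : G)).symm)⟩,
            (show (v : G) * (g : G) ≠ (g : G) * (v : G) from fun h =>
            g.2 (Subgroup.mem_centralizer_singleton_iff.mpr h.symm))⟩
          left_inv := fun z => by ext; rfl
          right_inv := fun g => by ext; rfl }
      have hcard : Γ.degree v = Fintype.card {g : G // g ∉ Subgroup.centralizer {(v : G)}} := by
        rw [← card_neighborSet_eq_degree]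
        exact Fintype.card_congr e
      have hcompl : Fintype.card {g : G // g ∉ Subgroup.centralizer {(v : G)}}
          = N - Nat.card (Subgroup.centralizer {(v : G)}) := by
        rw [Fintype.card_subtype_compl, hN, Nat.card_eq_fintype_card, Nat.card_eq_fintype_card]
      have hc2 := hcent (v : G) (hne1 v)
      have hcle : Nat.card (Subgroup.centralizer {(v : G)}) ≤ N := by omega
      omega
    -- edge count lower bound
    set E := Γ.edgeFinset.card with hE
    have hEdges : (N - 1) * N ≤ 4 * E := by
      have h1 : (N - 1) * N = ∑ _v : {x : G // x ∉ Subgroup.center G}, N := by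
        rw [Finset.sum_const, Finset.card_univ, smul_eq_mul, ← Nat.card_eq_fintype_card, hVcard]
      have h2 : ∑ _v : {x : G // x ∉ Subgroup.center G}, N
          ≤ ∑ v, 2 * Γ.degree v := Finset.sum_le_sum (fun v _ => hdegv v)
      have h3 : ∑ v, 2 * Γ.degree v = 2 * ∑ v, Γ.degree v := by
        rw [Finset.mul_sum]
      rw [h1]
      calc ∑ _v : {x : G // x ∉ Subgroup.center G}, N ≤ _ := h2
        _ = 2 * ∑ v, Γ.degree v := h3
        _ = 2 * (2 * E) := by rw [Γ.sum_degrees_eq_twice_card_edges]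
        _ = 4 * E := by ring
    have hENat : Nat.card Γ.edgeSet = E := by
      rw [Nat.card_eq_fintype_card, hE, SimpleGraph.edgeFinset, Set.toFinset_card]
    -- every vertex is in at least two darts
    have hdarts : ∀ d : Γ.Dart, ∃ e : Γ.Dart, e.toProd.1 = d.toProd.1 ∧ e ≠ d := by
      intro d
      have hdeg2 : 1 < Fintype.card (Γ.neighborSet d.toProd.1) := by
        rw [card_neighborSet_eq_degree]
        have := hdegv d.toProd.1
        omega
      obtain ⟨w, hw⟩ := Fintype.exists_ne_of_one_lt_card hdeg2 ⟨d.toProd.2, d.adj⟩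
      refine ⟨⟨(d.toProd.1, (w : {x : G // x ∉ Subgroup.center G})), w.2⟩, rfl, ?_⟩
      intro h
      apply hw
      have := congrArg (fun d : Γ.Dart => d.toProd.2) h
      exact Subtype.ext this
    -- no isolated vertices
    have hiso : Nat.card {v : {x : G // x ∉ Subgroup.center G} // ∀ w, ¬ Γ.Adj v w} = 0 := by
      have : IsEmpty {v : {x : G // x ∉ Subgroup.center G} // ∀ w, ¬ Γ.Adj v w} := by
        constructor
        rintro ⟨v, hv⟩
        have h1 := hdegv v
        have hpos : 0 < Γ.degree v := by omega
        obtain ⟨w, hw⟩ := Γ.degree_pos_iff_exists_adj v |>.mp hpos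
        exact hv w hw
      exact Nat.card_of_isEmpty
    -- at least one connected component
    haveI : Nonempty {x : G // x ∉ Subgroup.center G} :=
      ⟨⟨y, fun h => hy1 (by rw [hZ] at h; simpa using h)⟩⟩
    haveI : Finite Γ.ConnectedComponent := Quot.finite _
    haveI : Nonempty Γ.ConnectedComponent := ⟨Γ.connectedComponentMk (Classical.arbitrary _)⟩
    have hccpos : 0 < Nat.card Γ.ConnectedComponent := Nat.card_pos
    -- extract the embedding scheme from crosscap = 1
    have hne : {k : ℕ | ∃ S : EmbeddingScheme Γ, ¬ S.Orientable ∧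
        (Nat.card Γ.edgeSet : ℤ) + 2 * Nat.card Γ.ConnectedComponent
          ≤ Nat.card {x : G // x ∉ Subgroup.center G} + S.numFaces + k}.Nonempty := by
      by_contra h
      rw [Set.not_nonempty_iff_eq_empty] at h
      have h0 : crosscap Γ = 0 := by
        show sInf _ = 0
        rw [h, Nat.sInf_empty]
      rw [h0] at hcross
      omega
    have hmem : crosscap Γ ∈ {k : ℕ | ∃ S : EmbeddingScheme Γ, ¬ S.Orientable ∧
        (Nat.card Γ.edgeSet : ℤ) + 2 * Nat.card Γ.ConnectedComponent
          ≤ Nat.card {x : G // x ∉ Subgroup.center G} + S.numFaces + k} :=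
      Nat.sInf_mem hne
    rw [hcross] at hmem
    obtain ⟨S₀, -, hEuler⟩ := hmem
    -- face count bound
    set q := Nat.card (Quotient (Relation.EqvGen.setoid
      (fun a b : Γ.Dart × Bool => S₀.faceStep a = b))) with hq
    have h3q : 3 * q ≤ Nat.card (Γ.Dart × Bool) :=
      three_mul_card_le S₀.faceStep (faceStep_ne S₀) (faceStep_faceStep_ne S₀ hdarts)
    have hDB : Nat.card (Γ.Dart × Bool) = 4 * E := by
      rw [Nat.card_prod, Nat.card_eq_fintype_card, Nat.card_eq_fintype_card,
        Γ.dart_card_eq_twice_card_edges, Fintype.card_bool]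
      ring
    rw [hDB] at h3q
    have hF : S₀.numFaces = q / 2 := by
      rw [EmbeddingScheme.numFaces, hiso, add_zero]
    -- Euler formula contradiction
    rw [hENat, hVcard, hF] at hEuler
    have h23 : 23 * N ≤ (N - 1) * N := Nat.mul_le_mul_right N (by omega)
    omega
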